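/- Let β ≥ 0 and let A = (a_{n,k}) be a lower triangular infinite matrix of nonnegative real numbers (a_{n,k} = 0 for k > n). Suppose there is a constant C, independent of n and m, such that Σ_{k=0}^{m-1} (k+1)^β |a_{n,k}/(k+1)^β − a_{n,k+1}/(k+2)^β| ≤ C·a_{n,m} for all 0 ≤ m ≤ n. Then, uniformly in 0 < t ≤ π, |K_n(t)| := |Σ_{k=0}^{n} a_{n,k} · sin((k+1/2)t)/(2 sin(t/2))| = O(a_{n,n}/t²), with the implied constant independent of n and t. -/

import Mathlib

open Real MeasureTheory

/-- The kernel `K_n(t) = ∑_{k=0}^n a_{n,k} sin((k+1/2)t) / (2 sin(t/2))`. -/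
noncomputable def kernelK (a : ℕ → ℕ → ℝ) (n : ℕ) (t : ℝ) : ℝ :=
  ∑ k ∈ Finset.range (n + 1), a n k * Real.sin (((k : ℝ) + 1 / 2) * t) / (2 * Real.sin (t / 2))

/-- Telescoping identity for the sum of sines. -/
lemma sin_sum_mul (t : ℝ) (m : ℕ) :
    (∑ j ∈ Finset.range m, Real.sin (((j : ℝ) + 1 / 2) * t)) * (2 * Real.sin (t / 2))
      = 1 - Real.cos ((m : ℝ) * t) := by
  induction m with
  | zero => simp
  | succ m ih =>
    rw [Finset.sum_range_succ, add_mul, ih]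
    have h1 : ((m : ℝ) * t + ((m : ℝ) + 1) * t) / 2 = ((m : ℝ) + 1 / 2) * t := by ring
    have h2 : ((m : ℝ) * t - ((m : ℝ) + 1) * t) / 2 = -(t / 2) := by ring
    have key : Real.sin (((m : ℝ) + 1 / 2) * t) * (2 * Real.sin (t / 2))
        = Real.cos ((m : ℝ) * t) - Real.cos (((m : ℝ) + 1) * t) := by
      rw [Real.cos_sub_cos, h1, h2, Real.sin_neg]; ring
    push_cast
    linarith [key]

/-- Bound on partial sums of the Dirichlet-type kernel. -/
lemma dirichlet_partial_bound (t : ℝ) (ht : 0 < t) (ht' : t ≤ Real.pi) (m : ℕ) :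
    |∑ j ∈ Finset.range m, Real.sin (((j : ℝ) + 1 / 2) * t) / (2 * Real.sin (t / 2))|
      ≤ Real.pi ^ 2 / (2 * t ^ 2) := by
  have hπ := Real.pi_pos
  have hs : 0 < Real.sin (t / 2) :=
    Real.sin_pos_of_pos_of_lt_pi (by linarith) (by linarith)
  have hjordan : t / Real.pi ≤ Real.sin (t / 2) := by
    have := Real.mul_le_sin (x := t / 2) (by linarith) (by linarith)
    calc t / Real.pi = 2 / Real.pi * (t / 2) := by ring
      _ ≤ Real.sin (t / 2) := this
  set s := Real.sin (t / 2) with hs_def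
  have hsum : ∑ j ∈ Finset.range m, Real.sin (((j : ℝ) + 1 / 2) * t) / (2 * s)
      = (1 - Real.cos ((m : ℝ) * t)) / ((2 * s) * (2 * s)) := by
    rw [← Finset.sum_div, ← sin_sum_mul t m]
    field_simp
    simp only [← hs_def]
    rw [Finset.sum_congr rfl fun (x : ℕ) _ => show Real.sin (((x:ℝ) * 2 + 1) * t / 2) = Real.sin (t * (2 * (x:ℝ) + 1) / 2) by ring_nf, mul_comm]
  rw [hsum, abs_div, abs_of_pos (by positivity : (0:ℝ) < (2 * s) * (2 * s))]
  have habs : |1 - Real.cos ((m : ℝ) * t)| ≤ 2 := by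
    rw [abs_le]
    constructor <;> [skip; skip] <;>
      linarith [Real.cos_le_one ((m : ℝ) * t), Real.neg_one_le_cos ((m : ℝ) * t)]
  have hsq : t ^ 2 / Real.pi ^ 2 ≤ s ^ 2 := by
    have : (t / Real.pi) ^ 2 ≤ s ^ 2 := by
      apply pow_le_pow_left₀ (by positivity) hjordan
    calc t ^ 2 / Real.pi ^ 2 = (t / Real.pi) ^ 2 := by rw [div_pow]
      _ ≤ s ^ 2 := this
  calc |1 - Real.cos ((m : ℝ) * t)| / ((2 * s) * (2 * s))
      ≤ 2 / ((2 * s) * (2 * s)) := by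
        apply div_le_div_of_nonneg_right habs (by positivity) |>.trans_eq rfl
      _ = 1 / (2 * s ^ 2) := by ring
      _ ≤ 1 / (2 * (t ^ 2 / Real.pi ^ 2)) := by
        apply one_div_le_one_div_of_le (by positivity)
        linarith
      _ = Real.pi ^ 2 / (2 * t ^ 2) := by
        field_simp

/-- Total variation bound on the rows of the matrix. -/
lemma row_variation_bound
    (β : ℝ) (hβ : 0 ≤ β)
    (a : ℕ → ℕ → ℝ)
    (hnn : ∀ n k : ℕ, 0 ≤ a n k)
    (C : ℝ)
    (hA : ∀ n m : ℕ, m ≤ n →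
      ∑ k ∈ Finset.range m,
        ((k : ℝ) + 1) ^ β * |a n k / ((k : ℝ) + 1) ^ β - a n (k + 1) / ((k : ℝ) + 2) ^ β|
        ≤ C * a n m)
    (n : ℕ) :
    ∑ k ∈ Finset.range n, |a n k - a n (k + 1)| ≤ (1 + 2 * C) * a n n := by
  set b : ℕ → ℝ := fun k => a n k / ((k : ℝ) + 1) ^ β with hb_def
  have hcast : ∀ k : ℕ, (((k + 1 : ℕ) : ℝ) + 1) = (k : ℝ) + 2 := by
    intro k; push_cast; ring
  have hpow : ∀ k : ℕ, (0 : ℝ) < ((k : ℝ) + 1) ^ β := by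
    intro k; apply Real.rpow_pos_of_pos; positivity
  have hpow1 : ∀ k : ℕ, (1 : ℝ) ≤ ((k : ℝ) + 1) ^ β := by
    intro k
    calc (1 : ℝ) = (1 : ℝ) ^ β := (Real.one_rpow β).symm
      _ ≤ ((k : ℝ) + 1) ^ β := by
        apply Real.rpow_le_rpow zero_le_one (by push_cast; linarith [Nat.cast_nonneg (α := ℝ) k]) hβ
  have hmono : ∀ k : ℕ, ((k : ℝ) + 1) ^ β ≤ ((k : ℝ) + 2) ^ β := by
    intro k
    apply Real.rpow_le_rpow (by positivity) (by linarith) hβ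
  have hbnn : ∀ k : ℕ, 0 ≤ b k := by
    intro k; exact div_nonneg (hnn n k) (hpow k).le
  have ha : ∀ k : ℕ, a n k = ((k : ℝ) + 1) ^ β * b k := by
    intro k
    simp only [hb_def]
    rw [mul_div_cancel₀ _ (hpow k).ne']
  have hb_eq : ∀ k : ℕ,
      |b k - b (k + 1)| = |a n k / ((k : ℝ) + 1) ^ β - a n (k + 1) / ((k : ℝ) + 2) ^ β| := by
    intro k
    simp only [hb_def]
    rw [hcast k]
  have hS1 : ∑ k ∈ Finset.range n, ((k : ℝ) + 1) ^ β * |b k - b (k + 1)| ≤ C * a n n := by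
    calc ∑ k ∈ Finset.range n, ((k : ℝ) + 1) ^ β * |b k - b (k + 1)|
        = ∑ k ∈ Finset.range n,
            ((k : ℝ) + 1) ^ β * |a n k / ((k : ℝ) + 1) ^ β - a n (k + 1) / ((k : ℝ) + 2) ^ β| := by
          apply Finset.sum_congr rfl; intro k _; rw [hb_eq k]
      _ ≤ C * a n n := hA n n le_rfl
  -- Abel summation for the second sum
  set g : ℕ → ℝ := fun k => (((k : ℝ) + 1) ^ β - 1) * b k with hg_def
  have habel : ∀ k : ℕ,
      (((k : ℝ) + 2) ^ β - ((k : ℝ) + 1) ^ β) * b (k + 1)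
        = (g (k + 1) - g k) - ((((k : ℝ) + 1) ^ β - 1) * (b (k + 1) - b k)) := by
    intro k
    simp only [hg_def]
    rw [hcast k]
    ring
  have hg0 : g 0 = 0 := by simp [hg_def, Real.one_rpow]
  have hgn : g n ≤ a n n := by
    simp only [hg_def]
    rw [ha n]
    have := hbnn n
    nlinarith [hpow1 n]
  have hS2 : ∑ k ∈ Finset.range n, (((k : ℝ) + 2) ^ β - ((k : ℝ) + 1) ^ β) * b (k + 1)
      ≤ a n n + C * a n n := by
    have heq : ∑ k ∈ Finset.range n, (((k : ℝ) + 2) ^ β - ((k : ℝ) + 1) ^ β) * b (k + 1)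
        = (g n - g 0) - ∑ k ∈ Finset.range n, (((k : ℝ) + 1) ^ β - 1) * (b (k + 1) - b k) := by
      rw [← Finset.sum_range_sub g n, ← Finset.sum_sub_distrib]
      apply Finset.sum_congr rfl
      intro k _
      exact habel k
    rw [heq, hg0, sub_zero]
    have hbd : ∑ k ∈ Finset.range n, (((k : ℝ) + 1) ^ β - 1) * (b (k + 1) - b k)
        ≥ -(C * a n n) := by
      have h1 : ∀ k ∈ Finset.range n,
          -(((k : ℝ) + 1) ^ β * |b k - b (k + 1)|)
            ≤ (((k : ℝ) + 1) ^ β - 1) * (b (k + 1) - b k) := by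
        intro k _
        have h2 : |(((k : ℝ) + 1) ^ β - 1) * (b (k + 1) - b k)|
            ≤ ((k : ℝ) + 1) ^ β * |b k - b (k + 1)| := by
          rw [abs_mul, abs_of_nonneg (by linarith [hpow1 k]), abs_sub_comm (b (k+1))]
          apply mul_le_mul_of_nonneg_right (by linarith [hpow1 k]) (abs_nonneg _)
        linarith [neg_abs_le ((((k : ℝ) + 1) ^ β - 1) * (b (k + 1) - b k))]
      have := Finset.sum_le_sum h1
      rw [Finset.sum_neg_distrib] at this
      linarith [hS1]
    linarith [hgn]
  have step : ∀ k : ℕ, |a n k - a n (k + 1)|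
      ≤ ((k : ℝ) + 1) ^ β * |b k - b (k + 1)|
        + (((k : ℝ) + 2) ^ β - ((k : ℝ) + 1) ^ β) * b (k + 1) := by
    intro k
    have e : a n k - a n (k + 1)
        = ((k : ℝ) + 1) ^ β * (b k - b (k + 1))
          - (((k : ℝ) + 2) ^ β - ((k : ℝ) + 1) ^ β) * b (k + 1) := by
      rw [ha k, ha (k + 1), hcast k]
      ring
    rw [e]
    have h1 : |((k : ℝ) + 1) ^ β * (b k - b (k + 1))|
        = ((k : ℝ) + 1) ^ β * |b k - b (k + 1)| := by
      rw [abs_mul, abs_of_pos (hpow k)]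
    have h2 : (0 : ℝ) ≤ (((k : ℝ) + 2) ^ β - ((k : ℝ) + 1) ^ β) * b (k + 1) := by
      apply mul_nonneg (by linarith [hmono k]) (hbnn (k + 1))
    calc |((k : ℝ) + 1) ^ β * (b k - b (k + 1))
          - (((k : ℝ) + 2) ^ β - ((k : ℝ) + 1) ^ β) * b (k + 1)|
        ≤ |((k : ℝ) + 1) ^ β * (b k - b (k + 1))|
          + |(((k : ℝ) + 2) ^ β - ((k : ℝ) + 1) ^ β) * b (k + 1)| := abs_sub _ _
      _ = ((k : ℝ) + 1) ^ β * |b k - b (k + 1)|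
          + (((k : ℝ) + 2) ^ β - ((k : ℝ) + 1) ^ β) * b (k + 1) := by
          rw [h1, abs_of_nonneg h2]
  calc ∑ k ∈ Finset.range n, |a n k - a n (k + 1)|
      ≤ ∑ k ∈ Finset.range n,
          (((k : ℝ) + 1) ^ β * |b k - b (k + 1)|
            + (((k : ℝ) + 2) ^ β - ((k : ℝ) + 1) ^ β) * b (k + 1)) :=
        Finset.sum_le_sum fun k _ => step k
    _ = (∑ k ∈ Finset.range n, ((k : ℝ) + 1) ^ β * |b k - b (k + 1)|)
        + ∑ k ∈ Finset.range n, (((k : ℝ) + 2) ^ β - ((k : ℝ) + 1) ^ β) * b (k + 1) :=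
        Finset.sum_add_distrib
    _ ≤ C * a n n + (a n n + C * a n n) := add_le_add hS1 hS2
    _ = (1 + 2 * C) * a n n := by ring

theorem kernel_est_HBV
    (β : ℝ) (hβ : 0 ≤ β)
    (a : ℕ → ℕ → ℝ) (htri : ∀ n k : ℕ, n < k → a n k = 0)
    (hnn : ∀ n k : ℕ, 0 ≤ a n k)
    (C : ℝ) (hC : 0 < C)
    (hA : ∀ n m : ℕ, m ≤ n →
      ∑ k ∈ Finset.range m,
        ((k : ℝ) + 1) ^ β * |a n k / ((k : ℝ) + 1) ^ β - a n (k + 1) / ((k : ℝ) + 2) ^ β|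
        ≤ C * a n m)
    :
    ∃ C' : ℝ, 0 < C' ∧ ∀ (n : ℕ) (t : ℝ), 0 < t → t ≤ Real.pi →
      |kernelK a n t| ≤ C' * (a n n / t ^ 2) := by
  have hπ := Real.pi_pos
  refine ⟨(1 + C) * Real.pi ^ 2, by positivity, fun n t ht ht' => ?_⟩
  set g : ℕ → ℝ := fun j => Real.sin (((j : ℝ) + 1 / 2) * t) / (2 * Real.sin (t / 2)) with hg_def
  set B : ℝ := Real.pi ^ 2 / (2 * t ^ 2) with hB_def
  have hB : ∀ m : ℕ, |∑ j ∈ Finset.range m, g j| ≤ B :=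
    fun m => dirichlet_partial_bound t ht ht' m
  have hBnn : 0 ≤ B := by positivity
  have hK : kernelK a n t = ∑ k ∈ Finset.range (n + 1), a n k * g k := by
    unfold kernelK
    apply Finset.sum_congr rfl
    intro k _
    rw [hg_def, mul_div_assoc]
  have hparts := Finset.sum_range_by_parts (a n) g (n + 1)
  simp only [smul_eq_mul, Nat.add_sub_cancel] at hparts
  rw [hK, hparts]
  have hvar : ∑ k ∈ Finset.range n, |a n k - a n (k + 1)| ≤ (1 + 2 * C) * a n n :=
    row_variation_bound β hβ a hnn C hA n
  have h1 : |a n n * ∑ i ∈ Finset.range (n + 1), g i| ≤ a n n * B := by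
    rw [abs_mul, abs_of_nonneg (hnn n n)]
    exact mul_le_mul_of_nonneg_left (hB (n + 1)) (hnn n n)
  have h2 : |∑ i ∈ Finset.range n, (a n (i + 1) - a n i) * ∑ j ∈ Finset.range (i + 1), g j|
      ≤ (1 + 2 * C) * a n n * B := by
    calc |∑ i ∈ Finset.range n, (a n (i + 1) - a n i) * ∑ j ∈ Finset.range (i + 1), g j|
        ≤ ∑ i ∈ Finset.range n, |(a n (i + 1) - a n i) * ∑ j ∈ Finset.range (i + 1), g j| :=
          Finset.abs_sum_le_sum_abs _ _
      _ ≤ ∑ i ∈ Finset.range n, |a n i - a n (i + 1)| * B := by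
          apply Finset.sum_le_sum
          intro i _
          rw [abs_mul, abs_sub_comm (a n (i + 1))]
          exact mul_le_mul_of_nonneg_left (hB (i + 1)) (abs_nonneg _)
      _ = (∑ i ∈ Finset.range n, |a n i - a n (i + 1)|) * B := by rw [← Finset.sum_mul]
      _ ≤ (1 + 2 * C) * a n n * B :=
          mul_le_mul_of_nonneg_right hvar hBnn
  calc |a n n * (∑ i ∈ Finset.range (n + 1), g i)
        - ∑ i ∈ Finset.range n, (a n (i + 1) - a n i) * ∑ j ∈ Finset.range (i + 1), g j|
      ≤ |a n n * ∑ i ∈ Finset.range (n + 1), g i|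
        + |∑ i ∈ Finset.range n, (a n (i + 1) - a n i) * ∑ j ∈ Finset.range (i + 1), g j| :=
        abs_sub _ _
    _ ≤ a n n * B + (1 + 2 * C) * a n n * B := add_le_add h1 h2
    _ = (a n n * (2 + 2 * C)) * (Real.pi ^ 2 / (2 * t ^ 2)) := by rw [hB_def]; ring
    _ = (1 + C) * Real.pi ^ 2 * (a n n / t ^ 2) := by
        field_simp
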